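/- The map χ = (min, dif, wrd) is a bijection from the set of wide triangular partitions with at least two parts onto the set of triples (m, d, w) with m, d positive integers, w a balanced binary word containing at least one zero, m ≤ d + 1, and additionally w1 balanced with at least one zero whenever m = d + 1. Its inverse is ξ(m, d, w₁...w_{k−1}) = (τ₁,...,τ_k) with τ_i = m + Σ_{j=i}^{k−1} (w_j + d). -/

import Mathlib

/-- The list `L = [τ₁, ..., τ_k]` is a triangular partition cut off by a line
x/r + y/s = 1 with the extra requirement r > s (a "wide" cutting line). -/
def IsWideList (L : List ℕ) : Prop :=
  ∃ r s : ℝ, 0 < r ∧ 0 < s ∧ s < r ∧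
    (∀ j : Fin L.length, (L.get j : ℤ) = ⌊r - (((j : ℕ) : ℝ) + 1) * r / s⌋) ∧
    (L.length : ℤ) = ⌊s - s / r⌋

/-- A binary word (list over {0,1}) is balanced: any two factors of equal length
have numbers of ones differing by at most 1. -/
def IsBalanced (w : List ℕ) : Prop :=
  (∀ x ∈ w, x ≤ 1) ∧
    ∀ i j h : ℕ, i + h ≤ w.length → j + h ≤ w.length →
      |(((w.drop i).take h).sum : ℤ) - (((w.drop j).take h).sum : ℤ)| ≤ 1

/-- Consecutive differences [τ₁−τ₂, ..., τ_{k−1}−τ_k]. -/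
def diffsL (L : List ℕ) : List ℕ := List.zipWith (fun a b => a - b) L L.tail

/-- dif(τ): the minimum consecutive part difference. -/
def difL (L : List ℕ) : ℕ := (diffsL L).foldr min L.headI

/-- wrd(τ): the binary word with letters τ_i − τ_{i+1} − dif(τ). -/
def wrdL (L : List ℕ) : List ℕ := (diffsL L).map (fun x => x - difL L)

/-- χ(τ) = (min τ, dif τ, wrd τ). -/
def chi (L : List ℕ) : ℕ × ℕ × List ℕ := (L.getLastD 0, difL L, wrdL L)

/-- ξ(m, d, w₁...w_{k−1}) = (τ₁, ..., τ_k) with τ_i = m + Σ_{j=i}^{k−1} (w_j + d). -/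
def xi (m d : ℕ) : List ℕ → List ℕ
  | [] => [m]
  | a :: t => (a + d + (xi m d t).headI) :: xi m d t

/-- The domain of χ: wide triangular partitions with at least two parts. -/
def chiDom : Set (List ℕ) := {L | IsWideList L ∧ 2 ≤ L.length}

/-- The target of χ: triples (m, d, w) of positive integers m, d and a balanced
word w containing a zero, with m ≤ d + 1, and w1 balanced with a zero if m = d + 1. -/
def chiTarget : Set (ℕ × ℕ × List ℕ) :=
  {p | 1 ≤ p.1 ∧ 1 ≤ p.2.1 ∧ IsBalanced p.2.2 ∧ 0 ∈ p.2.2 ∧ p.1 ≤ p.2.1 + 1 ∧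
    (p.1 = p.2.1 + 1 → IsBalanced (p.2.2 ++ [1]) ∧ 0 ∈ p.2.2 ++ [1])}

namespace Tri

/-- prefix sums over ℤ -/
def S (w : List ℕ) (i : ℕ) : ℤ := ((w.take i).sum : ℤ)

lemma S_window (w : List ℕ) (i h : ℕ) :
    (((w.drop i).take h).sum : ℤ) = S w (i + h) - S w i := by
  have : w.take (i + h) = w.take i ++ (w.drop i).take h := List.take_add
  simp [S, this]

lemma S_mono (w : List ℕ) {i j : ℕ} (hij : i ≤ j) : S w i ≤ S w j := by
  have e : i + (j - i) = j := by omega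
  have h1 := S_window w i (j - i)
  rw [e] at h1
  have h0 : (0:ℤ) ≤ ((List.take (j-i) (List.drop i w)).sum : ℤ) := by positivity
  omega

lemma balanced_window {w : List ℕ} (hb : IsBalanced w) {i j h : ℕ}
    (hi : i + h ≤ w.length) (hj : j + h ≤ w.length) :
    |(S w (i+h) - S w i) - (S w (j+h) - S w j)| ≤ 1 := by
  have := hb.2 i j h hi hj
  rwa [S_window, S_window] at this

/-- Key inequality: for any two windows in a balanced word,
`h₁·G₂ − h₂·G₁ ≤ h₁ + h₂ − 1`. -/
lemma pair_ineq {w : List ℕ} (hb : IsBalanced w) :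
    ∀ N i₁ h₁ i₂ h₂ : ℕ, h₁ + h₂ ≤ N → 0 < h₁ → 0 < h₂ →
      i₁ + h₁ ≤ w.length → i₂ + h₂ ≤ w.length →
      (h₁ : ℤ) * (S w (i₂+h₂) - S w i₂) - (h₂ : ℤ) * (S w (i₁+h₁) - S w i₁)
        ≤ (h₁ : ℤ) + h₂ - 1 := by
  intro N
  induction N using Nat.strong_induction_on with
  | _ N IH =>
    intro i₁ h₁ i₂ h₂ hN hp1 hp2 hr1 hr2
    rcases lt_trichotomy h₁ h₂ with hlt | heq | hgt
    · -- split window 2 : D = [i₂, i₂+(h₂−h₁)), B = [i₂+h₂−h₁, i₂+h₂)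
      set h₃ := h₂ - h₁ with hh3
      have h3pos : 0 < h₃ := by omega
      have hB : |(S w (i₂+h₂) - S w (i₂+h₃)) - (S w (i₁+h₁) - S w i₁)| ≤ 1 := by
        have := balanced_window hb (i := i₂ + h₃) (j := i₁) (h := h₁)
          (by omega) (by omega)
        have e : i₂ + h₃ + h₁ = i₂ + h₂ := by omega
        rwa [e] at this
      have hIH := IH (h₁ + h₃) (by omega) i₁ h₁ i₂ h₃ (le_refl _) hp1 h3pos hr1 (by omega)
      have hc0 : (S w (i₂+h₂) - S w (i₂+h₃)) - (S w (i₁+h₁) - S w i₁) ≤ 1 := (abs_le.mp hB).2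
      have hc1 : (h₁:ℤ) * ((S w (i₂+h₂) - S w (i₂+h₃)) - (S w (i₁+h₁) - S w i₁)) ≤ (h₁:ℤ) * 1 :=
        mul_le_mul_of_nonneg_left hc0 (by positivity)
      have e2 : (h₂:ℤ) = (h₁:ℤ) + h₃ := by push_cast; omega
      have hsplit : (h₁:ℤ) * (S w (i₂+h₂) - S w i₂)
          = h₁ * ((S w (i₂+h₂) - S w (i₂+h₃)) - (S w (i₁+h₁) - S w i₁))
            + h₁ * (S w (i₂+h₃) - S w i₂) + h₁ * (S w (i₁+h₁) - S w i₁) := by ring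
      have hA : (h₂:ℤ) * (S w (i₁+h₁) - S w i₁)
          = (h₁:ℤ) * (S w (i₁+h₁) - S w i₁) + (h₃:ℤ) * (S w (i₁+h₁) - S w i₁) := by
        rw [e2]; ring
      linarith
    · subst heq
      have := balanced_window hb hr2 hr1
      have h1 : (S w (i₂+h₁) - S w i₂) - (S w (i₁+h₁) - S w i₁) ≤ 1 := (abs_le.mp this).2
      nlinarith
    · -- split window 1
      set h₃ := h₁ - h₂ with hh3
      have h3pos : 0 < h₃ := by omega
      have hB : |(S w (i₁+h₁) - S w (i₁+h₃)) - (S w (i₂+h₂) - S w i₂)| ≤ 1 := by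
        have := balanced_window hb (i := i₁ + h₃) (j := i₂) (h := h₂)
          (by omega) (by omega)
        have e : i₁ + h₃ + h₂ = i₁ + h₁ := by omega
        rwa [e] at this
      have hIH := IH (h₃ + h₂) (by omega) i₁ h₃ i₂ h₂ (le_refl _) h3pos hp2 (by omega) hr2
      have e2 : (h₁:ℤ) = (h₃:ℤ) + h₂ := by push_cast; omega
      have hc0 : (S w (i₂+h₂) - S w i₂) - (S w (i₁+h₁) - S w (i₁+h₃)) ≤ 1 := by
        have := (abs_le.mp hB).1; linarith
      have hc1 : (h₂:ℤ) * ((S w (i₂+h₂) - S w i₂) - (S w (i₁+h₁) - S w (i₁+h₃))) ≤ (h₂:ℤ) * 1 :=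
        mul_le_mul_of_nonneg_left hc0 (by positivity)
      have hsplit : (h₂:ℤ) * (S w (i₁+h₁) - S w i₁)
          = h₂ * (S w (i₁+h₁) - S w (i₁+h₃)) + h₂ * (S w (i₁+h₃) - S w i₁) := by ring
      have hB2 : (h₁:ℤ) * (S w (i₂+h₂) - S w i₂)
          = (h₃:ℤ) * (S w (i₂+h₂) - S w i₂)
            + (h₂:ℤ) * ((S w (i₂+h₂) - S w i₂) - (S w (i₁+h₁) - S w (i₁+h₃)))
            + (h₂:ℤ) * (S w (i₁+h₁) - S w (i₁+h₃)) := by rw [e2]; ring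
      linarith


lemma S_single (w : List ℕ) (i : ℕ) (hi : i < w.length) :
    S w (i+1) - S w i = (w.getD i 0 : ℤ) := by
  have h2 : (w.take (i+1)).sum = (w.take i).sum + w.get ⟨i, hi⟩ := List.sum_take_succ w i hi
  have h3 : w.getD i 0 = w.get ⟨i, hi⟩ := by
    rw [List.getD_eq_getElem w 0 hi]; rfl
  simp only [S, h2, h3]
  push_cast
  ring

lemma exists_slope {w : List ℕ} (hb : IsBalanced w) (h0 : 0 ∈ w) :
    ∃ β ρ : ℝ, 0 < β ∧ β < 1 ∧
      ∀ i ≤ w.length, (i:ℝ) * β - (S w i : ℝ) ≤ ρ ∧ ρ < (i:ℝ) * β - (S w i : ℝ) + 1 := by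
  set n := w.length with hn
  have hn1 : 1 ≤ n := by
    have : w ≠ [] := by rintro rfl; simp at h0
    have := List.length_pos_iff.mpr this; omega
  set W : Finset (ℕ × ℕ) :=
    (Finset.range (n+1) ×ˢ Finset.range (n+1)).filter (fun p => 0 < p.2 ∧ p.1 + p.2 ≤ n) with hW
  have hmemW : ∀ p : ℕ × ℕ, p ∈ W ↔ 0 < p.2 ∧ p.1 + p.2 ≤ n := by
    intro p
    simp only [hW, Finset.mem_filter, Finset.mem_product, Finset.mem_range]
    constructor
    · rintro ⟨_, h⟩; exact h
    · rintro ⟨h1, h2⟩; exact ⟨⟨by omega, by omega⟩, h1, h2⟩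
  have hne : W.Nonempty := ⟨(0,1), (hmemW _).mpr ⟨by norm_num, by omega⟩⟩
  set G : ℕ × ℕ → ℤ := fun p => S w (p.1 + p.2) - S w p.1 with hG
  set lo : ℕ × ℕ → ℝ := fun p => ((G p : ℝ) - 1) / p.2 with hlo
  set hi : ℕ × ℕ → ℝ := fun p => ((G p : ℝ) + 1) / p.2 with hhi
  have key : ∀ p ∈ W, ∀ q ∈ W, lo p < hi q := by
    intro p hp q hq
    rw [hmemW] at hp hq
    have h2p : (0:ℝ) < p.2 := by exact_mod_cast hp.1
    have h2q : (0:ℝ) < q.2 := by exact_mod_cast hq.1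
    rw [hlo, hhi, div_lt_div_iff₀ h2p h2q]
    have hk := pair_ineq hb (q.2 + p.2) q.1 q.2 p.1 p.2 le_rfl hq.1 hp.1 hq.2 hp.2
    have : (q.2 : ℤ) * G p - (p.2 : ℤ) * G q ≤ q.2 + p.2 - 1 := hk
    have : ((G p : ℝ) - 1) * q.2 < ((G q : ℝ) + 1) * p.2 := by
      have hc : ((q.2 : ℝ)) * G p - ((p.2 : ℝ)) * G q ≤ (q.2:ℝ) + p.2 - 1 := by
        exact_mod_cast this
      nlinarith
    exact this
  have hBlo_lt : W.sup' hne lo < W.inf' hne hi := by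
    rw [Finset.sup'_lt_iff]
    intro p hp
    rw [Finset.lt_inf'_iff]
    intro q hq
    exact key p hp q hq
  set Bhi := W.inf' hne hi with hBhi
  have hBhi_pos : 0 < Bhi := by
    rw [hBhi, Finset.lt_inf'_iff]
    intro q hq
    rw [hmemW] at hq
    have h2q : (0:ℝ) < q.2 := by exact_mod_cast hq.1
    have hGq : (0:ℤ) ≤ G q := by
      have := S_mono w (show q.1 ≤ q.1 + q.2 by omega); simp [hG]; omega
    have : (0:ℝ) ≤ (G q : ℝ) := by exact_mod_cast hGq
    positivity
  have hBhi_le1 : Bhi ≤ 1 := by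
    obtain ⟨iz, hiz, hz⟩ := List.mem_iff_getElem.mp h0
    have hmem : (iz, 1) ∈ W := (hmemW _).mpr ⟨by norm_num, by omega⟩
    have hGz : G (iz, 1) = 0 := by
      have := S_single w iz hiz
      rw [List.getD_eq_getElem w 0 hiz, hz] at this
      simpa [hG] using this
    have h1 : hi (iz, 1) = 1 := by
      rw [hhi]; simp [hGz]
    have := Finset.inf'_le hi hmem
    rw [h1] at this
    exact this
  set β := (max (W.sup' hne lo) 0 + Bhi) / 2 with hβ
  have hmax_lt : max (W.sup' hne lo) 0 < Bhi := max_lt hBlo_lt hBhi_pos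
  have hβ_pos : 0 < β := by
    have : (0:ℝ) ≤ max (W.sup' hne lo) 0 := le_max_right _ _
    rw [hβ]; linarith
  have hβ_ltBhi : β < Bhi := by rw [hβ]; linarith [le_max_left (W.sup' hne lo) (0:ℝ)]
  have hβ_lt1 : β < 1 := lt_of_lt_of_le hβ_ltBhi hBhi_le1
  have hβ_gt_lo : ∀ p ∈ W, lo p < β := by
    intro p hp
    have h1 : lo p ≤ W.sup' hne lo := Finset.le_sup' lo hp
    have h2 : W.sup' hne lo ≤ max (W.sup' hne lo) 0 := le_max_left _ _
    have : max (W.sup' hne lo) 0 < β := by rw [hβ]; linarith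
    linarith
  have hβ_lt_hi : ∀ q ∈ W, β < hi q := fun q hq =>
    lt_of_lt_of_le hβ_ltBhi (Finset.inf'_le hi hq)
  -- now ρ
  have hne2 : (Finset.range (n+1)).Nonempty := ⟨0, by simp⟩
  set f : ℕ → ℝ := fun i => (i:ℝ) * β - (S w i : ℝ) with hf
  set ρ := (Finset.range (n+1)).sup' hne2 f with hρ
  refine ⟨β, ρ, hβ_pos, hβ_lt1, ?_⟩
  intro i hi'
  constructor
  · exact Finset.le_sup' f (by simp; omega)
  · obtain ⟨j, hj, hjeq⟩ := Finset.exists_mem_eq_sup' hne2 f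
    rw [hρ, hjeq]
    simp only [Finset.mem_range] at hj
    rcases lt_trichotomy j i with hlt | heq | hgt
    · -- j < i : window (j, i - j), use lo < β
      have hmem : (j, i - j) ∈ W := (hmemW _).mpr ⟨by omega, by omega⟩
      have := hβ_gt_lo _ hmem
      rw [hlo] at this
      have h2 : (0:ℝ) < ((i - j : ℕ) : ℝ) := by
        have : 0 < i - j := by omega
        exact_mod_cast this
      rw [div_lt_iff₀ h2] at this
      have hGe : G (j, i - j) = S w i - S w j := by
        simp only [hG]; congr 2; omega
      rw [hGe] at this
      have hcast : ((i - j : ℕ) : ℝ) = (i:ℝ) - j := by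
        have : (j:ℝ) ≤ i := by exact_mod_cast hlt.le
        push_cast [Nat.cast_sub hlt.le]; ring
      rw [hcast] at this
      push_cast at this ⊢
      simp only [hf]
      nlinarith
    · subst heq; simp [hf]
    · -- i < j : window (i, j - i), use β < hi
      have hmem : (i, j - i) ∈ W := (hmemW _).mpr ⟨by omega, by omega⟩
      have := hβ_lt_hi _ hmem
      rw [hhi] at this
      have h2 : (0:ℝ) < ((j - i : ℕ) : ℝ) := by
        have : 0 < j - i := by omega
        exact_mod_cast this
      rw [lt_div_iff₀ h2] at this
      have hGe : G (i, j - i) = S w j - S w i := by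
        simp only [hG]; congr 2; omega
      rw [hGe] at this
      have hcast : ((j - i : ℕ) : ℝ) = (j:ℝ) - i := by
        push_cast [Nat.cast_sub hgt.le]; ring
      rw [hcast] at this
      push_cast at this ⊢
      simp only [hf]
      nlinarith


lemma xi_ne_nil (m d : ℕ) (w : List ℕ) : xi m d w ≠ [] := by
  cases w <;> simp [xi]

lemma length_xi (m d : ℕ) (w : List ℕ) : (xi m d w).length = w.length + 1 := by
  induction w with
  | nil => simp [xi]
  | cons a t ih => simp [xi, ih]

lemma headI_xi (m d : ℕ) (w : List ℕ) :
    (xi m d w).headI = m + w.sum + w.length * d := by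
  induction w with
  | nil => simp [xi]
  | cons a t ih => simp [xi, ih]; ring

lemma getD_xi (m d : ℕ) (w : List ℕ) :
    ∀ j ≤ w.length, (xi m d w).getD j 0 = m + (w.drop j).sum + (w.length - j) * d := by
  induction w with
  | nil =>
    intro j hj
    simp only [List.length_nil, Nat.le_zero] at hj
    subst hj; simp [xi]
  | cons a t ih =>
    intro j hj
    match j with
    | 0 =>
      have : (xi m d (a :: t)).getD 0 0 = (xi m d (a :: t)).headI := by
        simp [xi]
      rw [this, headI_xi]
      simp
    | j + 1 =>
      have : (xi m d (a :: t)).getD (j+1) 0 = (xi m d t).getD j 0 := by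
        simp [xi]
      rw [this, ih j (by simpa using hj)]
      simp [Nat.succ_sub_succ]

lemma getLastD_xi (m d : ℕ) (w : List ℕ) : (xi m d w).getLastD 0 = m := by
  induction w with
  | nil => simp [xi]
  | cons a t ih =>
    have h := xi_ne_nil m d t
    cases hx : xi m d t with
    | nil => exact absurd hx h
    | cons b u => simp [xi, hx] at ih ⊢; exact ih

lemma diffs_xi (m d : ℕ) (w : List ℕ) :
    diffsL (xi m d w) = w.map (· + d) := by
  induction w with
  | nil => simp [xi, diffsL]
  | cons a t ih =>
    obtain ⟨b, u, hx⟩ : ∃ b u, xi m d t = b :: u := by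
      cases hxx : xi m d t with
      | nil => exact absurd hxx (xi_ne_nil m d t)
      | cons b u => exact ⟨b, u, rfl⟩
    have hhead : (xi m d t).headI = b := by rw [hx]; rfl
    have ih' := ih
    rw [hx] at ih'
    show diffsL ((a + d + (xi m d t).headI) :: xi m d t) = _
    rw [hhead, hx]
    simp only [diffsL, List.tail_cons, List.zipWith_cons_cons, List.map_cons]
    have e1 : a + d + b - b = a + d := by omega
    rw [e1]
    exact congrArg (List.cons (a+d)) (by simpa [diffsL] using ih')

lemma foldr_min_le_mem {l : List ℕ} {b x : ℕ} (hx : x ∈ l) : l.foldr min b ≤ x := by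
  induction l with
  | nil => simp at hx
  | cons a t ih =>
    simp only [List.foldr_cons]
    rcases List.mem_cons.mp hx with rfl | hx'
    · exact min_le_left _ _
    · exact le_trans (min_le_right _ _) (ih hx')

lemma le_foldr_min {l : List ℕ} {d b : ℕ} (hall : ∀ x ∈ l, d ≤ x) (hb : d ≤ b) :
    d ≤ l.foldr min b := by
  induction l with
  | nil => simpa
  | cons a t ih =>
    exact le_min (hall a (by simp)) (ih (fun x hx => hall x (by simp [hx])))

lemma foldr_min_eq_of_mem {l : List ℕ} {d b : ℕ} (hall : ∀ x ∈ l, d ≤ x)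
    (hmem : d ∈ l) (hb : d ≤ b) : l.foldr min b = d :=
  le_antisymm (foldr_min_le_mem hmem) (le_foldr_min hall hb)

lemma foldr_min_mem {l : List ℕ} {b : ℕ} (hne : l ≠ []) (hall : ∀ x ∈ l, x ≤ b) :
    l.foldr min b ∈ l := by
  induction l with
  | nil => simp at hne
  | cons a t ih =>
    simp only [List.foldr_cons]
    cases t with
    | nil =>
      have h1 : min a (List.foldr min b []) = min a b := rfl
      rw [h1, min_eq_left (hall a (by simp))]
      simp
    | cons c u =>
      have hmem := ih (by simp) (fun x hx => hall x (List.mem_cons_of_mem a hx))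
      rcases le_total a ((c :: u).foldr min b) with h | h
      · rw [min_eq_left h]; simp
      · rw [min_eq_right h]; exact List.mem_cons_of_mem a hmem

lemma difL_xi (m d : ℕ) (w : List ℕ) (h0 : 0 ∈ w) : difL (xi m d w) = d := by
  rw [difL, diffs_xi]
  apply foldr_min_eq_of_mem
  · intro x hx
    simp only [List.mem_map] at hx
    obtain ⟨y, _, rfl⟩ := hx; omega
  · simp only [List.mem_map]; exact ⟨0, h0, by simp⟩
  · rw [headI_xi]
    have h1 : w.length ≥ 1 := List.length_pos_iff.mpr (by rintro rfl; simp at h0)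
    have h2 : d ≤ w.length * d := Nat.le_mul_of_pos_left d (by omega)
    omega

lemma wrdL_xi (m d : ℕ) (w : List ℕ) (h0 : 0 ∈ w) : wrdL (xi m d w) = w := by
  rw [wrdL, difL_xi m d w h0, diffs_xi]
  rw [List.map_map]
  have : ((fun x => x - d) ∘ (· + d)) = id := by funext x; simp
  simp [this]

lemma chi_xi (m d : ℕ) (w : List ℕ) (h0 : 0 ∈ w) : chi (xi m d w) = (m, d, w) := by
  unfold chi
  rw [getLastD_xi, difL_xi m d w h0, wrdL_xi m d w h0]

/-- generalized left inverse: reconstruct a decreasing list from its last element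
and the (d-shifted) difference word. -/
lemma xi_reconstruct : ∀ (L : List ℕ) (d : ℕ), L ≠ [] →
    (∀ i, i + 1 < L.length → L.getD (i+1) 0 + d ≤ L.getD i 0) →
    xi (L.getLastD 0) d ((diffsL L).map (· - d)) = L := by
  intro L
  induction L with
  | nil => intro d h; simp at h
  | cons x t ih =>
    intro d _ hdec
    cases t with
    | nil => simp [diffsL, xi]
    | cons y u =>
      have hrec := ih d (by simp)
        (fun i hi => by
          have := hdec (i+1) (by simpa using hi)
          simpa using this)
      have hLast : (x :: y :: u).getLastD 0 = (y :: u).getLastD 0 := by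
        simp [List.getLastD]
      have hdiffs : diffsL (x :: y :: u) = (x - y) :: diffsL (y :: u) := by
        simp [diffsL]
      rw [hLast, hdiffs]
      simp only [List.map_cons, xi, hrec]
      have hhead : (y :: u).headI = y := rfl
      rw [hhead]
      have h0 := hdec 0 (by simp)
      simp only [List.getD_cons_succ, List.getD_cons_zero] at h0
      congr 1
      omega


lemma headI_eq_getD {L : List ℕ} (h : L ≠ []) : L.headI = L.getD 0 0 := by
  cases L with
  | nil => simp at h
  | cons a t => rfl

lemma getLastD_eq_getD {L : List ℕ} (h : L ≠ []) :
    L.getLastD 0 = L.getD (L.length - 1) 0 := by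
  induction L with
  | nil => simp at h
  | cons a t ih =>
    cases t with
    | nil => rfl
    | cons b u =>
      have h2 := ih (by simp)
      have e1 : (a :: b :: u).getLastD 0 = (b :: u).getLastD 0 := by
        simp [List.getLastD]
      have e2 : (a :: b :: u).length - 1 = (b :: u).length - 1 + 1 := by
        simp
      rw [e1, h2, e2]
      rfl

lemma length_diffsL (L : List ℕ) : (diffsL L).length = L.length - 1 := by
  cases L with
  | nil => simp [diffsL]
  | cons a t => simp [diffsL]

lemma getD_diffsL {L : List ℕ} {t : ℕ} (ht : t + 1 < L.length) :
    (diffsL L).getD t 0 = L.getD t 0 - L.getD (t+1) 0 := by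
  have hlt : t < (diffsL L).length := by rw [length_diffsL]; omega
  have htt : t < L.tail.length := by simp [List.length_tail]; omega
  rw [List.getD_eq_getElem _ 0 hlt, List.getD_eq_getElem L 0 (by omega : t < L.length),
    List.getD_eq_getElem L 0 ht]
  show (List.zipWith (fun a b => a - b) L L.tail)[t]'(by simpa [diffsL] using hlt) = _
  rw [List.getElem_zipWith]
  congr 1
  rw [List.getElem_tail]

lemma getD_map_sub (l : List ℕ) (d t : ℕ) (ht : t < l.length) :
    (l.map (fun x => x - d)).getD t 0 = l.getD t 0 - d := by
  have h2 : t < (l.map (fun x => x - d)).length := by simpa using ht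
  rw [List.getD_eq_getElem _ 0 h2, List.getD_eq_getElem l 0 ht, List.getElem_map]

lemma getD_append_left (l l' : List ℕ) (t : ℕ) (ht : t < l.length) :
    (l ++ l').getD t 0 = l.getD t 0 := by
  have h2 : t < (l ++ l').length := by simp; omega
  rw [List.getD_eq_getElem _ 0 h2, List.getD_eq_getElem l 0 ht,
    List.getElem_append_left ht]

lemma getD_append_right_one (l : List ℕ) (c : ℕ) :
    (l ++ [c]).getD l.length 0 = c := by
  have h2 : l.length < (l ++ [c]).length := by simp
  rw [List.getD_eq_getElem _ 0 h2]
  rw [List.getElem_append_right (le_refl l.length)]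
  simp

lemma mem_of_getD {l : List ℕ} {t x : ℕ} (ht : t < l.length) (hx : l.getD t 0 = x) :
    x ∈ l := by
  rw [List.getD_eq_getElem l 0 ht] at hx
  exact hx ▸ List.getElem_mem ht


lemma floor_window (x y : ℝ) : ⌊y⌋ ≤ ⌊x + y⌋ - ⌊x⌋ ∧ ⌊x + y⌋ - ⌊x⌋ ≤ ⌊y⌋ + 1 := by
  constructor
  · have h1 : (↑(⌊x⌋ + ⌊y⌋) : ℝ) ≤ x + y := by
      push_cast
      exact add_le_add (Int.floor_le x) (Int.floor_le y)
    have := Int.le_floor.mpr h1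
    omega
  · have h1 : x + y < ↑(⌊x⌋ + ⌊y⌋ + 2) := by
      push_cast
      have := Int.lt_floor_add_one x
      have := Int.lt_floor_add_one y
      linarith
    have := Int.floor_lt.mpr h1
    omega

/-- a word whose letters are floor-differences minus `d` is balanced -/
lemma balanced_of_floor (u : List ℕ) (r α : ℝ) (d : ℤ)
    (hget : ∀ t, t < u.length → (u.getD t 0 : ℤ)
      = ⌊r - ((t:ℝ)+1)*α⌋ - ⌊r - ((t:ℝ)+2)*α⌋ - d)
    (hlet : ∀ x ∈ u, x ≤ 1) : IsBalanced u := by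
  have hwin : ∀ i h : ℕ, ⌊(h:ℝ)*α⌋ ≤ ⌊r - ((i:ℝ)+1)*α⌋ - ⌊r - ((i:ℝ)+1+h)*α⌋ ∧
      ⌊r - ((i:ℝ)+1)*α⌋ - ⌊r - ((i:ℝ)+1+h)*α⌋ ≤ ⌊(h:ℝ)*α⌋ + 1 := by
    intro i h
    have e : r - ((i:ℝ)+1)*α = (r - ((i:ℝ)+1+h)*α) + (h:ℝ)*α := by ring
    rw [e]
    exact floor_window _ _
  have hsum : ∀ i h : ℕ, i + h ≤ u.length →
      S u (i+h) - S u i = ⌊r - ((i:ℝ)+1)*α⌋ - ⌊r - ((i:ℝ)+1+h)*α⌋ - h * d := by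
    intro i h
    induction h with
    | zero => intro _; simp
    | succ h ih =>
      intro hle
      have h1 : i + h < u.length := by omega
      have h2 := S_single u (i+h) h1
      have h3 := ih (by omega)
      have h4 := hget (i+h) h1
      have e1 : i + (h+1) = (i + h) + 1 := by omega
      rw [e1]
      have : S u ((i+h)+1) = S u (i+h) + (u.getD (i+h) 0 : ℤ) := by omega
      rw [this, h4]
      rw [show S u (i+h) = S u i + (⌊r - ((i:ℝ)+1)*α⌋ - ⌊r - ((i:ℝ)+1+h)*α⌋ - h * d) by omega]
      have e2 : ((i:ℝ)+1+(h+1:ℕ)) = ((i+h:ℕ):ℝ)+2 := by push_cast; ring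
      have e3 : ((i+h:ℕ):ℝ)+1 = (i:ℝ)+1+(h:ℕ) := by push_cast; ring
      rw [e2, ← e3]
      push_cast
      ring
  constructor
  · exact hlet
  · intro i j h hi hj
    rw [S_window, S_window, hsum i h hi, hsum j h hj]
    have h1 := hwin i h
    have h2 := hwin j h
    rw [abs_le]
    constructor <;> [skip; skip] <;> omega


lemma wide_struct {L : List ℕ} (hL : L ∈ chiDom) :
    chi L ∈ chiTarget ∧ xi (L.getLastD 0) (difL L) (wrdL L) = L := by
  obtain ⟨⟨r, s, hr, hs, hsr, hget, hlen⟩, hk2⟩ := hL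
  set k := L.length with hk
  set α := r / s with hα
  have hα1 : 1 < α := (one_lt_div hs).mpr hsr
  have hα0 : 0 < α := by linarith
  set F : ℕ → ℤ := fun j => ⌊r - (j:ℝ) * α⌋ with hF
  have hgetF : ∀ j, j < k → (L.getD j 0 : ℤ) = F (j+1) := by
    intro j hj
    have h1 := hget ⟨j, hj⟩
    rw [List.getD_eq_getElem L 0 hj]
    have e : r - ((j:ℝ)+1) * r / s = r - ((j+1:ℕ):ℝ) * α := by
      rw [hα, mul_div_assoc]; push_cast; ring
    rw [show (L.get ⟨j, hj⟩) = L[j] from rfl] at h1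
    rw [h1]
    exact congrArg Int.floor e
  have hFwin : ∀ a h : ℕ, ⌊(h:ℝ)*α⌋ ≤ F a - F (a+h) ∧ F a - F (a+h) ≤ ⌊(h:ℝ)*α⌋ + 1 := by
    intro a h
    have e : r - (a:ℝ)*α = (r - ((a+h:ℕ):ℝ)*α) + (h:ℝ)*α := by push_cast; ring
    rw [hF]
    simp only
    rw [e]
    exact floor_window _ _
  have hαfloor : 1 ≤ ⌊α⌋ := by
    rw [Int.le_floor]; exact_mod_cast hα1.le
  have hFanti : ∀ a b : ℕ, a ≤ b → F b ≤ F a := by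
    intro a b hab
    apply Int.floor_le_floor
    have : (a:ℝ) ≤ (b:ℝ) := by exact_mod_cast hab
    nlinarith
  -- length facts
  have hsr' : s - s / r = (r - 1) / α := by
    rw [hα]; field_simp
  have hkle : (k:ℝ) * α ≤ r - 1 := by
    have h1 : ((k:ℤ):ℝ) ≤ s - s/r := by
      rw [hlen]; exact Int.floor_le _
    push_cast at h1
    rw [hsr'] at h1
    calc (k:ℝ) * α ≤ ((r-1)/α) * α := by nlinarith
    _ = r - 1 := by field_simp
  have hkgt : r - 1 < ((k:ℝ) + 1) * α := by
    have h1 : s - s/r < (k:ℝ) + 1 := by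
      have := Int.lt_floor_add_one (s - s/r)
      rw [← hlen] at this
      exact_mod_cast this
    rw [hsr'] at h1
    calc r - 1 = ((r-1)/α) * α := by field_simp
    _ < ((k:ℝ)+1) * α := by nlinarith
  have hFk1 : 1 ≤ F k := by
    rw [hF, Int.le_floor]
    push_cast
    linarith
  have hFk10 : F (k+1) ≤ 0 := by
    have : F (k+1) < 1 := by
      rw [hF, Int.floor_lt]
      push_cast
      linarith
    omega
  -- list structure
  have hk1 : 1 ≤ k := by omega
  have hLne : L ≠ [] := by
    rw [← List.length_pos_iff]; omega
  have hDlen : (diffsL L).length = k - 1 := length_diffsL L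
  have hLdec : ∀ t, t + 1 < k → L.getD (t+1) 0 ≤ L.getD t 0 := by
    intro t ht
    have h1 := hgetF t (by omega)
    have h2 : (L.getD (t+1) 0 : ℤ) = F (t+2) := by
      have := hgetF (t+1) ht
      rwa [show t+1+1 = t+2 by omega] at this
    have h3 := hFanti (t+1) (t+2) (by omega)
    omega
  have hDt : ∀ t, t + 1 < k → ((diffsL L).getD t 0 : ℤ) = F (t+1) - F (t+2) := by
    intro t ht
    rw [getD_diffsL ht]
    have h1 := hgetF t (by omega)
    have h2 : (L.getD (t+1) 0 : ℤ) = F (t+2) := by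
      have := hgetF (t+1) ht
      rwa [show t+1+1 = t+2 by omega] at this
    have h3 := hLdec t ht
    omega
  have hDup : ∀ t, t + 1 < k → ((diffsL L).getD t 0 : ℤ) ≤ ⌊α⌋ + 1 := by
    intro t ht
    rw [hDt t ht]
    have := (hFwin (t+1) 1).2
    have e : ((1:ℕ):ℝ) * α = α := by norm_num
    rw [e] at this
    have e2 : t + 1 + 1 = t + 2 := by omega
    rw [e2] at this
    exact this
  have hDlo : ∀ t, t + 1 < k → ⌊α⌋ ≤ ((diffsL L).getD t 0 : ℤ) := by
    intro t ht
    rw [hDt t ht]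
    have := (hFwin (t+1) 1).1
    have e : ((1:ℕ):ℝ) * α = α := by norm_num
    rw [e] at this
    have e2 : t + 1 + 1 = t + 2 := by omega
    rw [e2] at this
    exact this
  set d := difL L with hd
  have hd_le : ∀ t, t + 1 < k → d ≤ (diffsL L).getD t 0 := by
    intro t ht
    exact foldr_min_le_mem (mem_of_getD (by omega) rfl)
  have hd_mem : d ∈ diffsL L := by
    apply foldr_min_mem
    · rw [← List.length_pos_iff, hDlen]; omega
    · intro x hx
      obtain ⟨t, ht, hxt⟩ := List.mem_iff_getElem.mp hx
      rw [hDlen] at ht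
      have hxD : (diffsL L).getD t 0 = x := by
        rw [List.getD_eq_getElem _ 0 (by rw [hDlen]; omega)]; exact hxt
      have h1 : (x:ℤ) = F (t+1) - F (t+2) := by rw [← hxD]; exact hDt t (by omega)
      have h2 : (0:ℤ) ≤ F (t+2) := by
        have := hFanti (t+2) k (by omega)
        omega
      have h3 : (L.headI : ℤ) = F 1 := by
        rw [headI_eq_getD hLne]; exact hgetF 0 (by omega)
      have h4 := hFanti 1 (t+1) (by omega)
      have : (x:ℤ) ≤ (L.headI : ℤ) := by omega
      exact_mod_cast this
  have hd_floor : ⌊α⌋ ≤ (d:ℤ) := by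
    obtain ⟨t, ht, hxt⟩ := List.mem_iff_getElem.mp hd_mem
    rw [hDlen] at ht
    have hxD : (diffsL L).getD t 0 = d := by
      rw [List.getD_eq_getElem _ 0 (by rw [hDlen]; omega)]; exact hxt
    rw [← hxD]
    exact hDlo t (by omega)
  set m := L.getLastD 0 with hm
  have hmF : (m:ℤ) = F k := by
    rw [hm, getLastD_eq_getD hLne]
    have := hgetF (k-1) (by omega)
    rw [show k - 1 + 1 = k by omega] at this
    exact this
  -- components
  have c1 : 1 ≤ m := by
    have : (1:ℤ) ≤ (m:ℤ) := by rw [hmF]; exact hFk1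
    exact_mod_cast this
  have c2 : 1 ≤ d := by
    have : (1:ℤ) ≤ (d:ℤ) := le_trans hαfloor hd_floor
    exact_mod_cast this
  have c5 : m ≤ d + 1 := by
    have h1 := (hFwin k 1).2
    have e : ((1:ℕ):ℝ) * α = α := by norm_num
    rw [e] at h1
    have : (m:ℤ) ≤ (d:ℤ) + 1 := by omega
    exact_mod_cast this
  -- word
  have hwlen : (wrdL L).length = k - 1 := by
    rw [wrdL, List.length_map, hDlen]
  have hwt : ∀ t, t + 1 < k → ((wrdL L).getD t 0 : ℤ) = F (t+1) - F (t+2) - d := by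
    intro t ht
    rw [wrdL, getD_map_sub _ _ _ (by rw [hDlen]; omega)]
    have h1 := hDt t ht
    have h2 := hd_le t ht
    push_cast [Nat.cast_sub h2]
    omega
  have hw1 : ∀ x ∈ wrdL L, x ≤ 1 := by
    intro x hx
    obtain ⟨t, ht, hxt⟩ := List.mem_iff_getElem.mp hx
    rw [hwlen] at ht
    have hxD : (wrdL L).getD t 0 = x := by
      rw [List.getD_eq_getElem _ 0 (by rw [hwlen]; omega)]; exact hxt
    have h1 : (x:ℤ) = F (t+1) - F (t+2) - d := by rw [← hxD]; exact hwt t (by omega)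
    have h2 := hDup t (by omega)
    have h3 := hDt t (by omega)
    have : (x:ℤ) ≤ 1 := by omega
    exact_mod_cast this
  have hw0 : 0 ∈ wrdL L := by
    obtain ⟨t, ht, hxt⟩ := List.mem_iff_getElem.mp hd_mem
    rw [hDlen] at ht
    have hxD : (diffsL L).getD t 0 = d := by
      rw [List.getD_eq_getElem _ 0 (by rw [hDlen]; omega)]; exact hxt
    apply mem_of_getD (show t < (wrdL L).length by rw [hwlen]; omega)
    rw [wrdL, getD_map_sub _ _ _ (by rw [hDlen]; omega), hxD]
    omega
  have hbal : IsBalanced (wrdL L) := by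
    apply balanced_of_floor _ r α (d:ℤ) _ hw1
    intro t ht
    rw [hwlen] at ht
    rw [hwt t (by omega), hF]
    simp only
    congr 3 <;> push_cast <;> ring
  have hchi : chi L = (m, d, wrdL L) := rfl
  have hcase : m = d + 1 → IsBalanced (wrdL L ++ [1]) ∧ 0 ∈ wrdL L ++ [1] := by
    intro hmd
    have hFk1z : F (k+1) = 0 := by
      have h1 := (hFwin k 1).2
      have e : ((1:ℕ):ℝ) * α = α := by norm_num
      rw [e] at h1
      have : (m:ℤ) = (d:ℤ) + 1 := by exact_mod_cast hmd
      omega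
    have hwt' : ∀ t, t < k → (((wrdL L ++ [1]).getD t 0 : ℕ) : ℤ) = F (t+1) - F (t+2) - d := by
      intro t ht
      rcases lt_trichotomy t (k-1) with h | h | h
      · rw [getD_append_left _ _ _ (by rw [hwlen]; omega)]
        exact hwt t (by omega)
      · have e : t = (wrdL L).length := by rw [hwlen]; omega
        rw [e, getD_append_right_one]
        have e2 : (wrdL L).length + 1 = k := by rw [hwlen]; omega
        rw [e2]
        have : (m:ℤ) = (d:ℤ) + 1 := by exact_mod_cast hmd
        rw [show (wrdL L).length + 2 = k + 1 by omega, hFk1z]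
        omega
      · omega
    constructor
    · apply balanced_of_floor _ r α (d:ℤ)
      · intro t ht
        rw [List.length_append, hwlen] at ht
        simp only [List.length_singleton] at ht
        rw [hwt' t (by omega), hF]
        simp only
        congr 3 <;> push_cast <;> ring
      · intro x hx
        rcases List.mem_append.mp hx with h | h
        · exact hw1 x h
        · simp at h; omega
    · exact List.mem_append_left _ hw0
  constructor
  · rw [hchi]
    exact ⟨c1, c2, hbal, hw0, c5, hcase⟩
  · -- reconstruction
    apply xi_reconstruct L d hLne
    intro i hi
    have h1 := hd_le i hi
    have h2 := getD_diffsL hi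
    have h3 := hLdec i hi
    omega


lemma sum_drop (w : List ℕ) (i : ℕ) :
    ((w.drop i).sum : ℤ) = (w.sum : ℤ) - S w i := by
  have : w.take i ++ w.drop i = w := List.take_append_drop i w
  have h2 : (w.take i).sum + (w.drop i).sum = w.sum := by
    conv_rhs => rw [← this]
    rw [List.sum_append]
  simp only [S]
  omega

lemma S_take_full (w : List ℕ) : S w w.length = (w.sum : ℤ) := by
  simp [S]

lemma xi_mem_dom {m d : ℕ} {w : List ℕ} (hp : (m, d, w) ∈ chiTarget) :
    xi m d w ∈ chiDom := by
  obtain ⟨c1, c2, hbal, h0, c5, hcase⟩ := hp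
  replace c1 : 1 ≤ m := c1
  replace c2 : 1 ≤ d := c2
  replace hbal : IsBalanced w := hbal
  replace h0 : 0 ∈ w := h0
  replace c5 : m ≤ d + 1 := c5
  replace hcase : m = d + 1 → IsBalanced (w ++ [1]) ∧ 0 ∈ w ++ [1] := hcase
  set n := w.length with hn
  have hn1 : 1 ≤ n := by
    have : w ≠ [] := by rintro rfl; simp at h0
    have := List.length_pos_iff.mpr this; omega
  set k := n + 1 with hk
  have hlenL : (xi m d w).length = k := by rw [length_xi]
  set w'' : List ℕ := if m = d + 1 then w ++ [1] else w with hw''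
  have hb'' : IsBalanced w'' := by
    rw [hw'']; split
    · exact (hcase (by assumption)).1
    · exact hbal
  have h0'' : 0 ∈ w'' := by
    rw [hw'']; split
    · exact List.mem_append_left _ h0
    · exact h0
  obtain ⟨β, ρ, hβ0, hβ1, hcon⟩ := exists_slope hb'' h0''
  have hS'' : ∀ i ≤ n, S w'' i = S w i := by
    intro i hi
    rw [hw'']; split
    · simp only [S]
      rw [List.take_append_of_le_length (by omega : i ≤ w.length)]
    · rfl
  have hconw : ∀ i ≤ n, (i:ℝ)*β - ((S w i : ℤ) : ℝ) ≤ ρ ∧ ρ < (i:ℝ)*β - ((S w i : ℤ) : ℝ) + 1 := by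
    intro i hi
    have hl : i ≤ w''.length := by
      rw [hw'']
      split
      · simp only [List.length_append, List.length_singleton]; omega
      · omega
    have := hcon i hl
    rwa [hS'' i hi] at this
  set α : ℝ := (d:ℝ) + β with hα
  have hα1 : 1 < α := by
    rw [hα]
    have : (1:ℝ) ≤ (d:ℝ) := by exact_mod_cast c2
    linarith
  have hα0 : 0 < α := by linarith
  set r : ℝ := ((k:ℝ) * d + m + ((S w n : ℤ):ℝ)) + β + ρ with hr
  have hdropZ : ∀ i ≤ n, ((w.drop i).sum : ℤ) = S w n - S w i := by
    intro i hi
    rw [sum_drop]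
    have : S w n = (w.sum : ℤ) := by rw [hn]; exact S_take_full w
    omega
  have hziv : ∀ i ≤ n, ((m + (w.drop i).sum + (n - i) * d : ℕ) : ℤ)
      = (m:ℤ) + (S w n - S w i) + ((n:ℤ) - (i:ℤ)) * (d:ℤ) := by
    intro i hi
    rw [Nat.cast_add, Nat.cast_add, Nat.cast_mul, Nat.cast_sub hi, hdropZ i hi]
  have hfloor : ∀ i : ℕ, i ≤ n →
      (((m:ℤ) + (S w n - S w i) + ((n:ℤ) - (i:ℤ)) * (d:ℤ) : ℤ) : ℝ) ≤ r - ((i:ℝ)+1)*α ∧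
      r - ((i:ℝ)+1)*α < (((m:ℤ) + (S w n - S w i) + ((n:ℤ) - (i:ℤ)) * (d:ℤ) : ℤ) : ℝ) + 1 := by
    intro i hi
    obtain ⟨hc1, hc2⟩ := hconw i hi
    rw [hr, hα, hk]
    push_cast
    constructor
    · linarith
    · linarith
  have hlow : (k:ℝ) * α + 1 ≤ r := by
    have h1 := (hconw n le_rfl).1
    have h2 : (1:ℝ) ≤ (m:ℝ) := by exact_mod_cast c1
    rw [hr, hα, hk]
    push_cast
    linarith
  have hup : r < ((k:ℝ) + 1) * α + 1 := by
    rcases eq_or_ne m (d+1) with hmd | hmd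
    · have hl : n + 1 ≤ w''.length := by
        rw [hw'', if_pos hmd]; simp [hn]
      have h1 := (hcon (n+1) hl).2
      have hSval : S w'' (n+1) = S w n + 1 := by
        rw [hw'', if_pos hmd]
        have e1 : (w ++ [1]).take (n+1) = w ++ [1] :=
          List.take_of_length_le (by simp [hn])
        have e2 : w.take n = w := by rw [hn]; exact List.take_length
        simp only [S, e1, e2, List.sum_append]
        simp
      rw [hSval] at h1
      have hm' : (m:ℝ) = (d:ℝ) + 1 := by exact_mod_cast hmd
      rw [hr, hα, hk]
      push_cast
      push_cast at h1
      linarith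
    · have hmd' : m ≤ d := by omega
      have h1 := (hconw n le_rfl).2
      have h2 : (m:ℝ) ≤ (d:ℝ) := by exact_mod_cast hmd'
      rw [hr, hα, hk]
      push_cast
      linarith
  rw [hk] at hlow hup
  push_cast at hlow hup
  have hSn0 : (0:ℝ) ≤ ((S w n : ℤ):ℝ) := by
    have := S_mono w (show 0 ≤ n by omega)
    have h2 : S w 0 = 0 := by simp [S]
    have h3 : (0:ℤ) ≤ S w n := by omega
    exact_mod_cast h3
  have hr0 : 0 < r := by nlinarith
  set s : ℝ := r / α with hs
  have hs0 : 0 < s := by positivity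
  have hsr : s < r := by
    rw [hs, div_lt_iff₀ hα0]
    nlinarith
  have hrs : r / s = α := by
    rw [hs]
    field_simp
  constructor
  · refine ⟨r, s, hr0, hs0, hsr, ?_, ?_⟩
    · intro j
      have hjlt : (j:ℕ) < k := lt_of_lt_of_eq j.2 hlenL
      have hjn : (j:ℕ) ≤ n := by omega
      have hjL : (j:ℕ) < (xi m d w).length := j.2
      have hvN : (xi m d w).get j = m + (w.drop (j:ℕ)).sum + (n - (j:ℕ)) * d := by
        have h1 : (xi m d w).getD (j:ℕ) 0 = (xi m d w).get j := by
          rw [List.getD_eq_getElem _ 0 hjL]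
          rfl
        rw [← h1, getD_xi m d w (j:ℕ) hjn]
      rw [hvN]
      have e : r - (((j:ℕ):ℝ) + 1) * r / s = r - (((j:ℕ):ℝ)+1)*α := by
        rw [mul_div_assoc, hrs]
      rw [e, hziv (j:ℕ) hjn]
      have hfl := hfloor (j:ℕ) hjn
      symm
      rw [Int.floor_eq_iff]
      exact hfl
    · rw [hlenL]
      have hsse : s - s / r = (r - 1) / α := by
        rw [hs]
        have hrne : r ≠ 0 := ne_of_gt hr0
        have hαne : α ≠ 0 := ne_of_gt hα0
        field_simp
      rw [hsse]
      symm
      rw [Int.floor_eq_iff]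
      rw [hk]
      constructor
      · rw [le_div_iff₀ hα0]
        push_cast
        linarith
      · rw [div_lt_iff₀ hα0]
        push_cast
        linarith
  · rw [hlenL]; omega

end Tri


theorem stmt13 :
    Set.BijOn chi chiDom chiTarget ∧
      Set.InvOn (fun p : ℕ × ℕ × List ℕ => xi p.1 p.2.1 p.2.2) chi chiDom chiTarget := by
  have hmaps1 : Set.MapsTo chi chiDom chiTarget := fun L hL => (Tri.wide_struct hL).1
  have hmaps2 : Set.MapsTo (fun p : ℕ × ℕ × List ℕ => xi p.1 p.2.1 p.2.2) chiTarget chiDom := by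
    rintro ⟨m, d, w⟩ hp
    exact Tri.xi_mem_dom hp
  have hleft : Set.LeftInvOn (fun p : ℕ × ℕ × List ℕ => xi p.1 p.2.1 p.2.2) chi chiDom := by
    intro L hL
    exact (Tri.wide_struct hL).2
  have hright : Set.RightInvOn (fun p : ℕ × ℕ × List ℕ => xi p.1 p.2.1 p.2.2) chi chiTarget := by
    rintro ⟨m, d, w⟩ hp
    have h0 : 0 ∈ w := hp.2.2.2.1
    exact Tri.chi_xi m d w h0
  have hinv : Set.InvOn (fun p : ℕ × ℕ × List ℕ => xi p.1 p.2.1 p.2.2) chi chiDom chiTarget :=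
    ⟨hleft, hright⟩
  exact ⟨Set.InvOn.bijOn hinv hmaps1 hmaps2, hinv⟩
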